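/- The minimum cost of a fractional pebbling of the complete binary tree of height 4 is exactly 3. -/

import Mathlib

/-! ## Fractional black-white pebbling -/

/-- A fractional pebble configuration: black and white pebble values on each node. -/
structure FConfig (V : Type) where
  b : V → ℝ
  w : V → ℝ

namespace FConfig

/-- Validity: all values nonnegative, total value of each node at most 1. -/
def Valid {V : Type} (C : FConfig V) : Prop :=
  ∀ v, 0 ≤ C.b v ∧ 0 ≤ C.w v ∧ C.b v + C.w v ≤ 1

/-- Total pebble weight of a configuration. -/
noncomputable def weight {V : Type} [Fintype V] (C : FConfig V) : ℝ :=
  ∑ v, (C.b v + C.w v)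

/-- The empty configuration. -/
def zero (V : Type) : FConfig V := ⟨fun _ => 0, fun _ => 0⟩

/-- A whole (non-fractional) configuration: all values 0 or 1. -/
def Whole {V : Type} (C : FConfig V) : Prop :=
  ∀ v, (C.b v = 0 ∨ C.b v = 1) ∧ (C.w v = 0 ∨ C.w v = 1)

/-- A black configuration: whole, and with no white pebbles. -/
def BlackOnly {V : Type} (C : FConfig V) : Prop :=
  C.Whole ∧ ∀ v, C.w v = 0

end FConfig

/-- One legal move of the fractional black-white pebble game (no white sliding):
(i) decrease a black value; (ii) increase a white value; (iii) if every child of `v`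
has total pebble value 1, decrease `w v` to 0 and/or increase `b v` arbitrarily while
simultaneously decreasing the black values of the children of `v` arbitrarily.
Here `child c v` means `c` is a child of `v`. -/
def FMove {V : Type} (child : V → V → Prop) (C C' : FConfig V) : Prop :=
  (∃ v, C'.b v ≤ C.b v ∧ C'.w v = C.w v ∧
     ∀ u, u ≠ v → C'.b u = C.b u ∧ C'.w u = C.w u) ∨
  (∃ v, C'.b v = C.b v ∧ C.w v ≤ C'.w v ∧
     ∀ u, u ≠ v → C'.b u = C.b u ∧ C'.w u = C.w u) ∨
  (∃ v, (∀ c, child c v → C.b c + C.w c = 1) ∧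
     C.b v ≤ C'.b v ∧ (C'.w v = 0 ∨ C'.w v = C.w v) ∧
     (∀ c, child c v → C'.b c ≤ C.b c ∧ C'.w c = C.w c) ∧
     (∀ u, u ≠ v → ¬ child u v → C'.b u = C.b u ∧ C'.w u = C.w u))

/-- The additional white sliding move: if `w v = 1`, `j` is a child of `v`, and every
child of `v` other than `j` has total pebble value 1, then set `w v = 0` and increase
`w j` so that `j` gets total pebble value 1. -/
def WhiteSlide {V : Type} (child : V → V → Prop) (C C' : FConfig V) : Prop :=
  ∃ v j, child j v ∧ j ≠ v ∧ C.w v = 1 ∧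
    (∀ c, child c v → c ≠ j → C.b c + C.w c = 1) ∧
    C'.w v = 0 ∧ C'.b v = C.b v ∧
    C'.b j = C.b j ∧ C.w j ≤ C'.w j ∧ C'.b j + C'.w j = 1 ∧
    (∀ u, u ≠ v → u ≠ j → C'.b u = C.b u ∧ C'.w u = C.w u)

/-- A pebbling of cost at most `p`, with moves given by `move`, all configurations
satisfying the extra constraint `Extra`, starting and ending with the empty
configuration and achieving `Goal` (a property of the whole sequence together with
its length). -/
def PebblingLE {V : Type} [Fintype V] (move : FConfig V → FConfig V → Prop)
    (Extra : FConfig V → Prop) (Goal : (ℕ → FConfig V) → ℕ → Prop) (p : ℝ) : Prop :=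
  ∃ (n : ℕ) (C : ℕ → FConfig V),
    C 0 = FConfig.zero V ∧ C n = FConfig.zero V ∧
    (∀ t ≤ n, (C t).Valid) ∧
    (∀ t ≤ n, Extra (C t)) ∧
    (∀ t < n, move (C t) (C (t + 1))) ∧
    Goal C n ∧
    (∀ t ≤ n, (C t).weight ≤ p)

/-! ## The complete `d`-ary tree of height `h` (with `h` levels) -/

/-- Nodes of the complete `d`-ary tree with `h` levels: a level `l < h`
together with an index among the `d ^ l` nodes of that level. -/
abbrev TNode (d h : ℕ) := Σ l : Fin h, Fin (d ^ (l : ℕ))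

/-- `c` is a child of `v` in the complete `d`-ary tree. -/
def IsChild (d h : ℕ) (c v : TNode d h) : Prop :=
  (c.1 : ℕ) = (v.1 : ℕ) + 1 ∧ ∃ j : Fin d, (c.2 : ℕ) = d * (v.2 : ℕ) + (j : ℕ)

/-- The root of the tree. -/
def troot (d h : ℕ) (hh : 0 < h) : TNode d h :=
  ⟨⟨0, hh⟩, ⟨0, by simp⟩⟩

/-- The tree `T_d^h` has a black pebbling of cost at most `p`. -/
def BlackPebbles (d h : ℕ) (hh : 0 < h) (p : ℝ) : Prop :=
  PebblingLE (FMove (IsChild d h)) FConfig.BlackOnly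
    (fun C n => ∃ t ≤ n, (C t).b (troot d h hh) = 1) p

/-- The tree `T_d^h` has a whole black-white pebbling (no white sliding)
of cost at most `p`. -/
def BWPebbles (d h : ℕ) (hh : 0 < h) (p : ℝ) : Prop :=
  PebblingLE (FMove (IsChild d h)) FConfig.Whole
    (fun C n => ∃ t ≤ n, (C t).b (troot d h hh) = 1) p

/-- The tree `T_d^h` has a fractional pebbling of cost at most `p`. -/
def FRPebbles (d h : ℕ) (hh : 0 < h) (p : ℝ) : Prop :=
  PebblingLE (FMove (IsChild d h)) (fun _ => True)
    (fun C n => ∃ t ≤ n, (C t).b (troot d h hh) = 1) p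

/-- Fractional pebbling of `T_d^h` where white sliding moves are also permitted. -/
def FRPebblesWS (d h : ℕ) (hh : 0 < h) (p : ℝ) : Prop :=
  PebblingLE (fun C C' => FMove (IsChild d h) C C' ∨ WhiteSlide (IsChild d h) C C')
    (fun _ => True)
    (fun C n => ∃ t ≤ n, (C t).b (troot d h hh) = 1) p

section Generic
variable {V : Type} (child : V → V → Prop)

theorem black_incr {K K' : FConfig V} (h : FMove child K K') {u : V}
    (hu : K.b u < K'.b u) : ∀ c, child c u → K.b c + K.w c = 1 := by
  rcases h with ⟨v, h1, _, h3⟩ | ⟨v, h1, _, h3⟩ | ⟨v, hcrit, _, _, hch, hrest⟩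
  · by_cases huv : u = v
    · subst huv; linarith
    · linarith [(h3 u huv).1]
  · by_cases huv : u = v
    · subst huv; linarith
    · linarith [(h3 u huv).1]
  · by_cases huv : u = v
    · subst huv; exact hcrit
    · by_cases hc : child u v
      · linarith [(hch u hc).1]
      · linarith [(hrest u huv hc).1]

theorem white_decr {K K' : FConfig V} (h : FMove child K K') {u : V}
    (hu : K'.w u < K.w u) : ∀ c, child c u → K.b c + K.w c = 1 := by
  rcases h with ⟨v, _, h2, h3⟩ | ⟨v, _, h2, h3⟩ | ⟨v, hcrit, _, hw, hch, hrest⟩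
  · by_cases huv : u = v
    · subst huv; linarith
    · linarith [(h3 u huv).2]
  · by_cases huv : u = v
    · subst huv; linarith
    · linarith [(h3 u huv).2]
  · by_cases huv : u = v
    · subst huv; exact hcrit
    · by_cases hc : child u v
      · linarith [(hch u hc).2]
      · linarith [(hrest u huv hc).2]

variable {n : ℕ} {C : ℕ → FConfig V}

theorem exists_black_event (hC0 : C 0 = FConfig.zero V)
    (hmove : ∀ t < n, FMove child (C t) (C (t+1))) (u : V) :
    ∀ t, t ≤ n → 0 < (C t).b u →
    ∃ ρ, ρ < t ∧ (∀ c, child c u → (C ρ).b c + (C ρ).w c = 1) ∧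
      ∀ s, ρ < s → s ≤ t → (C t).b u ≤ (C s).b u := by
  intro t
  induction t with
  | zero => intro _ h; rw [hC0] at h; simp [FConfig.zero] at h
  | succ t ih =>
    intro htn hpos
    rcases le_or_gt ((C (t+1)).b u) ((C t).b u) with hle | hlt
    · obtain ⟨ρ, hρ, hcrit, hpers⟩ := ih (by omega) (lt_of_lt_of_le hpos hle)
      refine ⟨ρ, by omega, hcrit, ?_⟩
      intro s hs1 hs2
      rcases Nat.eq_or_lt_of_le hs2 with h | h
      · rw [h]
      · exact le_trans hle (hpers s hs1 (by omega))
    · refine ⟨t, by omega, black_incr child (hmove t (by omega)) hlt, ?_⟩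
      intro s hs1 hs2
      have : s = t + 1 := by omega
      subst this; exact le_refl _

theorem exists_white_event (hCn : C n = FConfig.zero V)
    (hmove : ∀ t < n, FMove child (C t) (C (t+1))) (u : V) :
    ∀ d t, n - t ≤ d → t ≤ n → 0 < (C t).w u →
    ∃ σ, t ≤ σ ∧ σ < n ∧ (∀ c, child c u → (C σ).b c + (C σ).w c = 1) ∧
      ∀ s, t ≤ s → s ≤ σ → (C t).w u ≤ (C s).w u := by
  intro d
  induction d with
  | zero =>
    intro t h1 h2 hpos
    have : t = n := by omega
    subst this; rw [hCn] at hpos; simp [FConfig.zero] at hpos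
  | succ d ih =>
    intro t h1 h2 hpos
    by_cases htn : t = n
    · subst htn; rw [hCn] at hpos; simp [FConfig.zero] at hpos
    · have htn' : t < n := by omega
      rcases lt_or_ge ((C (t+1)).w u) ((C t).w u) with hlt | hle
      · refine ⟨t, le_refl _, htn', white_decr child (hmove t htn') hlt, ?_⟩
        intro s hs1 hs2
        have : s = t := by omega
        rw [this]
      · obtain ⟨σ, hσ1, hσ2, hcrit, hpers⟩ :=
          ih (t+1) (by omega) (by omega) (lt_of_lt_of_le hpos hle)
        refine ⟨σ, by omega, hσ2, hcrit, ?_⟩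
        intro s hs1 hs2
        rcases Nat.eq_or_lt_of_le hs1 with h | h
        · rw [← h]
        · exact le_trans hle (hpers s (by omega) hs2)

theorem weight_ge4 [Fintype V] [DecidableEq V] (K : FConfig V) (hv : K.Valid)
    (x1 x2 x3 x4 : V) (h12 : x1 ≠ x2) (h13 : x1 ≠ x3) (h14 : x1 ≠ x4)
    (h23 : x2 ≠ x3) (h24 : x2 ≠ x4) (h34 : x3 ≠ x4)
    {r1 r2 r3 r4 : ℝ} (hr1 : r1 ≤ K.b x1 + K.w x1) (hr2 : r2 ≤ K.b x2 + K.w x2)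
    (hr3 : r3 ≤ K.b x3 + K.w x3) (hr4 : r4 ≤ K.b x4 + K.w x4) :
    r1 + r2 + r3 + r4 ≤ K.weight := by
  have hsub : ∑ x ∈ ({x1, x2, x3, x4} : Finset V), (K.b x + K.w x) ≤ K.weight := by
    apply Finset.sum_le_sum_of_subset_of_nonneg (Finset.subset_univ _)
    intro i _ _; exact add_nonneg (hv i).1 (hv i).2.1
  rw [Finset.sum_insert (by simp [h12, h13, h14]),
      Finset.sum_insert (by simp [h23, h24]),
      Finset.sum_insert (by simp [h34]), Finset.sum_singleton] at hsub
  linarith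

theorem weight_ge2 [Fintype V] [DecidableEq V] (K : FConfig V) (hv : K.Valid)
    (x1 x2 : V) (h12 : x1 ≠ x2)
    {r1 r2 : ℝ} (hr1 : r1 ≤ K.b x1 + K.w x1) (hr2 : r2 ≤ K.b x2 + K.w x2) :
    r1 + r2 ≤ K.weight := by
  have hsub : ∑ x ∈ ({x1, x2} : Finset V), (K.b x + K.w x) ≤ K.weight := by
    apply Finset.sum_le_sum_of_subset_of_nonneg (Finset.subset_univ _)
    intro i _ _; exact add_nonneg (hv i).1 (hv i).2.1
  rw [Finset.sum_insert (by simp [h12]), Finset.sum_singleton] at hsub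
  linarith

end Generic

namespace PebAux

instance (d h : ℕ) (c v : TNode d h) : Decidable (IsChild d h c v) := by
  unfold IsChild; infer_instance

abbrev V4 := TNode 2 4

def N (l i : ℕ) (hl : l < 4) (hi : i < 2^l) : V4 := ⟨⟨l, hl⟩, ⟨i, hi⟩⟩
def R : V4 := N 0 0 (by decide) (by norm_num)
def A0 : V4 := N 1 0 (by omega) (by norm_num)
def A1 : V4 := N 1 1 (by omega) (by norm_num)
def B0 : V4 := N 2 0 (by omega) (by norm_num)
def B1 : V4 := N 2 1 (by omega) (by norm_num)
def B2 : V4 := N 2 2 (by omega) (by norm_num)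
def B3 : V4 := N 2 3 (by omega) (by norm_num)
def L0 : V4 := N 3 0 (by omega) (by norm_num)
def L1 : V4 := N 3 1 (by omega) (by norm_num)
def L2 : V4 := N 3 2 (by omega) (by norm_num)
def L3 : V4 := N 3 3 (by omega) (by norm_num)
def L4 : V4 := N 3 4 (by omega) (by norm_num)
def L5 : V4 := N 3 5 (by omega) (by norm_num)
def L6 : V4 := N 3 6 (by omega) (by norm_num)
def L7 : V4 := N 3 7 (by omega) (by norm_num)

/-- configuration determined by a set of black nodes and a set of white nodes -/
def ofSets (Sb Sw : Finset V4) : FConfig V4 :=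
  ⟨fun u => if u ∈ Sb then 1 else 0, fun u => if u ∈ Sw then 1 else 0⟩

theorem ofSets_valid (Sb Sw : Finset V4) (h : ∀ u, u ∉ Sb ∨ u ∉ Sw) :
    (ofSets Sb Sw).Valid := by
  intro v
  rcases h v with hv | hv <;>
    by_cases hb : v ∈ Sb <;> by_cases hw : v ∈ Sw <;>
    simp_all [ofSets] <;> norm_num

theorem ofSets_empty : ofSets ∅ ∅ = FConfig.zero V4 := by
  simp [ofSets, FConfig.zero]

theorem ofSets_weight (Sb Sw : Finset V4) :
    (ofSets Sb Sw).weight = (Sb.card : ℝ) + Sw.card := by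
  rw [FConfig.weight]
  rw [Finset.sum_add_distrib]
  congr 1 <;> simp [ofSets, Finset.sum_ite_mem, Finset.univ_inter]

/-- general form of move (iii) between set-configurations -/
theorem move3 (Sb Sw Sb' Sw' : Finset V4) (v : V4)
    (hdisj : ∀ u, u ∉ Sb ∨ u ∉ Sw)
    (h1 : ∀ c, IsChild 2 4 c v → (c ∈ Sb ∨ c ∈ Sw))
    (h2 : v ∈ Sb → v ∈ Sb')
    (h3 : v ∉ Sw' ∨ ((v ∈ Sw') ↔ (v ∈ Sw)))
    (h4 : ∀ c, IsChild 2 4 c v → c ∉ Sb')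
    (h5 : ∀ c, IsChild 2 4 c v → ((c ∈ Sw') ↔ (c ∈ Sw)))
    (h6 : ∀ u, u ≠ v → ¬ IsChild 2 4 u v → ((u ∈ Sb') ↔ (u ∈ Sb)) ∧ ((u ∈ Sw') ↔ (u ∈ Sw))) :
    FMove (IsChild 2 4) (ofSets Sb Sw) (ofSets Sb' Sw') := by
  refine Or.inr (Or.inr ⟨v, ?_, ?_, ?_, ?_, ?_⟩)
  · intro c hc
    rcases h1 c hc with h | h
    · rcases hdisj c with h' | h'
      · exact absurd h h'
      · simp [ofSets, h, h']
    · rcases hdisj c with h' | h'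
      · simp [ofSets, h, h']
      · exact absurd h h'
  · by_cases hb : v ∈ Sb
    · simp [ofSets, hb, h2 hb]
    · simp only [ofSets, if_neg hb]
      split <;> norm_num
  · rcases h3 with h | h
    · left; simp [ofSets, h]
    · right; simp only [ofSets]; rw [if_congr h rfl rfl]
  · intro c hc
    constructor
    · simp only [ofSets, if_neg (h4 c hc)]
      split <;> norm_num
    · simp only [ofSets]; rw [if_congr (h5 c hc) rfl rfl]
  · intro u hu hnc
    constructor
    · simp only [ofSets]; rw [if_congr (h6 u hu hnc).1 rfl rfl]
    · simp only [ofSets]; rw [if_congr (h6 u hu hnc).2 rfl rfl]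

/-- place a white pebble -/
theorem move2 (Sb Sw Sw' : Finset V4) (v : V4)
    (h1 : v ∈ Sw → v ∈ Sw')
    (h2 : ∀ u, u ≠ v → ((u ∈ Sw') ↔ (u ∈ Sw))) :
    FMove (IsChild 2 4) (ofSets Sb Sw) (ofSets Sb Sw') := by
  refine Or.inr (Or.inl ⟨v, rfl, ?_, ?_⟩)
  · by_cases hw : v ∈ Sw
    · simp [ofSets, hw, h1 hw]
    · simp only [ofSets, if_neg hw]
      split <;> norm_num
  · intro u hu
    refine ⟨rfl, ?_⟩
    simp only [ofSets]; rw [if_congr (h2 u hu) rfl rfl]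

/-- remove a black pebble -/
theorem move1 (Sb Sb' Sw : Finset V4) (v : V4)
    (h1 : v ∉ Sb')
    (h2 : ∀ u, u ≠ v → ((u ∈ Sb') ↔ (u ∈ Sb))) :
    FMove (IsChild 2 4) (ofSets Sb Sw) (ofSets Sb' Sw) := by
  refine Or.inl ⟨v, ?_, rfl, ?_⟩
  · simp only [ofSets, if_neg h1]
    split <;> norm_num
  · intro u hu
    refine ⟨?_, rfl⟩
    simp only [ofSets]; rw [if_congr (h2 u hu) rfl rfl]

def SB : ℕ → Finset V4
  | 1 => {L0}
  | 2 => {L0, L1}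
  | 3 => {B0}
  | 4 => {B0, L2}
  | 5 => {B0, L2, L3}
  | 6 => {B0, B1}
  | 7 => {A0}
  | 8 => {A0, L4}
  | 9 => {A0, L4, L5}
  | 10 => {A0, B2}
  | 11 => {A0, B2}
  | 12 => {A0, A1}
  | 13 => {R}
  | 15 => {L6}
  | 16 => {L6, L7}
  | _ => ∅

def SW : ℕ → Finset V4
  | 11 => {B3}
  | 12 => {B3}
  | 13 => {B3}
  | 14 => {B3}
  | 15 => {B3}
  | 16 => {B3}
  | _ => ∅

noncomputable def Cseq : ℕ → FConfig V4 := fun t => ofSets (SB t) (SW t)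

theorem upper : FRPebbles 2 4 (by decide) 3 := by
  refine ⟨17, Cseq, ?_, ?_, ?_, fun _ _ => trivial, ?_, ?_, ?_⟩
  · show ofSets (SB 0) (SW 0) = _
    rw [show SB 0 = ∅ from rfl, show SW 0 = ∅ from rfl, ofSets_empty]
  · show ofSets (SB 17) (SW 17) = _
    rw [show SB 17 = ∅ from rfl, show SW 17 = ∅ from rfl, ofSets_empty]
  · intro t ht
    interval_cases t <;> exact ofSets_valid _ _ (by decide)
  · intro t ht
    interval_cases t
    · exact move3 (SB 0) (SW 0) (SB 1) (SW 1) L0 (by decide) (by decide) (by decide)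
        (by decide) (by decide) (by decide) (by decide)
    · exact move3 (SB 1) (SW 1) (SB 2) (SW 2) L1 (by decide) (by decide) (by decide)
        (by decide) (by decide) (by decide) (by decide)
    · exact move3 (SB 2) (SW 2) (SB 3) (SW 3) B0 (by decide) (by decide) (by decide)
        (by decide) (by decide) (by decide) (by decide)
    · exact move3 (SB 3) (SW 3) (SB 4) (SW 4) L2 (by decide) (by decide) (by decide)
        (by decide) (by decide) (by decide) (by decide)
    · exact move3 (SB 4) (SW 4) (SB 5) (SW 5) L3 (by decide) (by decide) (by decide)
        (by decide) (by decide) (by decide) (by decide)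
    · exact move3 (SB 5) (SW 5) (SB 6) (SW 6) B1 (by decide) (by decide) (by decide)
        (by decide) (by decide) (by decide) (by decide)
    · exact move3 (SB 6) (SW 6) (SB 7) (SW 7) A0 (by decide) (by decide) (by decide)
        (by decide) (by decide) (by decide) (by decide)
    · exact move3 (SB 7) (SW 7) (SB 8) (SW 8) L4 (by decide) (by decide) (by decide)
        (by decide) (by decide) (by decide) (by decide)
    · exact move3 (SB 8) (SW 8) (SB 9) (SW 9) L5 (by decide) (by decide) (by decide)
        (by decide) (by decide) (by decide) (by decide)
    · exact move3 (SB 9) (SW 9) (SB 10) (SW 10) B2 (by decide) (by decide) (by decide)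
        (by decide) (by decide) (by decide) (by decide)
    · exact move2 (SB 10) (SW 10) (SW 11) B3 (by decide) (by decide)
    · exact move3 (SB 11) (SW 11) (SB 12) (SW 12) A1 (by decide) (by decide) (by decide)
        (by decide) (by decide) (by decide) (by decide)
    · exact move3 (SB 12) (SW 12) (SB 13) (SW 13) R (by decide) (by decide) (by decide)
        (by decide) (by decide) (by decide) (by decide)
    · exact move1 (SB 13) (SB 14) (SW 13) R (by decide) (by decide)
    · exact move3 (SB 14) (SW 14) (SB 15) (SW 15) L6 (by decide) (by decide) (by decide)
        (by decide) (by decide) (by decide) (by decide)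
    · exact move3 (SB 15) (SW 15) (SB 16) (SW 16) L7 (by decide) (by decide) (by decide)
        (by decide) (by decide) (by decide) (by decide)
    · exact move3 (SB 16) (SW 16) (SB 17) (SW 17) B3 (by decide) (by decide) (by decide)
        (by decide) (by decide) (by decide) (by decide)
  · refine ⟨13, by omega, ?_⟩
    show (ofSets (SB 13) (SW 13)).b (troot 2 4 (by decide)) = 1
    rw [ofSets]
    simp only
    rw [if_pos (by decide)]
  · intro t ht
    show (ofSets (SB t) (SW t)).weight ≤ 3
    rw [ofSets_weight]
    have h : (SB t).card + (SW t).card ≤ 3 := by interval_cases t <;> decide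
    exact_mod_cast h


section Lower
variable {n : ℕ} {C : ℕ → FConfig V4} {p : ℝ}

theorem whites2 (hCn : C n = FConfig.zero V4)
    (hvalid : ∀ t ≤ n, (C t).Valid)
    (hmove : ∀ t < n, FMove (IsChild 2 4) (C t) (C (t + 1)))
    (hwt : ∀ t ≤ n, (C t).weight ≤ p)
    (t0 : ℕ) (ht0 : t0 ≤ n) (z0 z1 c00 c01 c10 c11 g0 g1 : V4)
    (hf : IsChild 2 4 c00 z0 ∧ IsChild 2 4 c01 z0 ∧ IsChild 2 4 c10 z1 ∧ IsChild 2 4 c11 z1 ∧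
        c00 ≠ c01 ∧ c00 ≠ z0 ∧ c00 ≠ z1 ∧ c01 ≠ z0 ∧ c01 ≠ z1 ∧
        c10 ≠ c11 ∧ c10 ≠ z0 ∧ c10 ≠ z1 ∧ c11 ≠ z0 ∧ c11 ≠ z1 ∧ z0 ≠ z1 ∧ g0 ≠ g1)
    (hg0 : (C t0).b g0 + (C t0).w g0 = 1) (hg1 : (C t0).b g1 + (C t0).w g1 = 1)
    (r0 r1 : ℝ) (hr0w : r0 ≤ (C t0).w z0) (hr1w : r1 ≤ (C t0).w z1) :
    2 + r0 + r1 ≤ p := by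
  obtain ⟨hc00, hc01, hc10, hc11, e1, e2, e3, e4, e5, e6, e7, e8, e9, e10, e11, e12⟩ := hf
  rcases lt_or_ge 0 r0 with h0 | h0 <;> rcases lt_or_ge 0 r1 with h1 | h1
  · -- both positive
    obtain ⟨σ0, hσ01, hσ02, crit0, pers0⟩ := exists_white_event (IsChild 2 4) hCn hmove z0 n
      t0 (by omega) ht0 (lt_of_lt_of_le h0 hr0w)
    obtain ⟨σ1, hσ11, hσ12, crit1, pers1⟩ := exists_white_event (IsChild 2 4) hCn hmove z1 n
      t0 (by omega) ht0 (lt_of_lt_of_le h1 hr1w)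
    rcases le_total σ0 σ1 with hle | hle
    · have f0 := crit0 c00 hc00
      have f1 := crit0 c01 hc01
      have hz0 : r0 ≤ (C σ0).b z0 + (C σ0).w z0 :=
        le_trans (le_trans hr0w (pers0 σ0 hσ01 (le_refl _)))
          (le_add_of_nonneg_left (hvalid σ0 (by omega) z0).1)
      have hz1 : r1 ≤ (C σ0).b z1 + (C σ0).w z1 :=
        le_trans (le_trans hr1w (pers1 σ0 hσ01 hle))
          (le_add_of_nonneg_left (hvalid σ0 (by omega) z1).1)
      have hw := weight_ge4 (C σ0) (hvalid σ0 (by omega)) c00 c01 z0 z1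
        e1 e2 e3 e4 e5 e11 f0.ge f1.ge hz0 hz1
      have := hwt σ0 (by omega)
      linarith
    · have f0 := crit1 c10 hc10
      have f1 := crit1 c11 hc11
      have hz1 : r1 ≤ (C σ1).b z1 + (C σ1).w z1 :=
        le_trans (le_trans hr1w (pers1 σ1 hσ11 (le_refl _)))
          (le_add_of_nonneg_left (hvalid σ1 (by omega) z1).1)
      have hz0 : r0 ≤ (C σ1).b z0 + (C σ1).w z0 :=
        le_trans (le_trans hr0w (pers0 σ1 hσ11 hle))
          (le_add_of_nonneg_left (hvalid σ1 (by omega) z0).1)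
      have hw := weight_ge4 (C σ1) (hvalid σ1 (by omega)) c10 c11 z1 z0
        e6 e8 e7 e10 e9 e11.symm f0.ge f1.ge hz1 hz0
      have := hwt σ1 (by omega)
      linarith
  · -- r0 positive, r1 ≤ 0
    obtain ⟨σ0, hσ01, hσ02, crit0, pers0⟩ := exists_white_event (IsChild 2 4) hCn hmove z0 n
      t0 (by omega) ht0 (lt_of_lt_of_le h0 hr0w)
    have f0 := crit0 c00 hc00
    have f1 := crit0 c01 hc01
    have hz0 : r0 ≤ (C σ0).b z0 + (C σ0).w z0 :=
      le_trans (le_trans hr0w (pers0 σ0 hσ01 (le_refl _)))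
        (le_add_of_nonneg_left (hvalid σ0 (by omega) z0).1)
    have hz1 : r1 ≤ (C σ0).b z1 + (C σ0).w z1 :=
      le_trans h1 (add_nonneg (hvalid σ0 (by omega) z1).1 (hvalid σ0 (by omega) z1).2.1)
    have hw := weight_ge4 (C σ0) (hvalid σ0 (by omega)) c00 c01 z0 z1
      e1 e2 e3 e4 e5 e11 f0.ge f1.ge hz0 hz1
    have := hwt σ0 (by omega)
    linarith
  · -- r1 positive, r0 ≤ 0
    obtain ⟨σ1, hσ11, hσ12, crit1, pers1⟩ := exists_white_event (IsChild 2 4) hCn hmove z1 n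
      t0 (by omega) ht0 (lt_of_lt_of_le h1 hr1w)
    have f0 := crit1 c10 hc10
    have f1 := crit1 c11 hc11
    have hz1 : r1 ≤ (C σ1).b z1 + (C σ1).w z1 :=
      le_trans (le_trans hr1w (pers1 σ1 hσ11 (le_refl _)))
        (le_add_of_nonneg_left (hvalid σ1 (by omega) z1).1)
    have hz0 : r0 ≤ (C σ1).b z0 + (C σ1).w z0 :=
      le_trans h0 (add_nonneg (hvalid σ1 (by omega) z0).1 (hvalid σ1 (by omega) z0).2.1)
    have hw := weight_ge4 (C σ1) (hvalid σ1 (by omega)) c10 c11 z1 z0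
      e6 e8 e7 e10 e9 e11.symm f0.ge f1.ge hz1 hz0
    have := hwt σ1 (by omega)
    linarith
  · have hw := weight_ge2 (C t0) (hvalid t0 ht0) g0 g1 e12 hg0.ge hg1.ge
    have := hwt t0 ht0
    linarith

theorem caseJK
    (hvalid : ∀ t ≤ n, (C t).Valid)
    (hwt : ∀ t ≤ n, (C t).weight ≤ p)
    (hp : p < 3)
    (x uj uk x0 x1 vk0 vk1 : V4)
    (t0 ρx ρy ρj ρk : ℕ)
    (hρxy : ρx < ρy) (hρyt : ρy < t0) (ht0 : t0 ≤ n)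
    (hjk : ρj < ρk) (hky : ρk < ρy)
    (critx : ∀ c, IsChild 2 4 c x → (C ρx).b c + (C ρx).w c = 1)
    (critk : ∀ c, IsChild 2 4 c uk → (C ρk).b c + (C ρk).w c = 1)
    (alivex : ∀ s, ρx < s → s ≤ t0 → (C t0).b x ≤ (C s).b x)
    (alivej : ∀ s, ρj < s → s ≤ ρy → (C ρy).b uj ≤ (C s).b uj)
    (alivek : ∀ s, ρk < s → s ≤ ρy → (C ρy).b uk ≤ (C s).b uk)
    (hvuj : (C ρy).b uj + (C ρy).w uj = 1)
    (hvuk : (C ρy).b uk + (C ρy).w uk = 1)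
    (hx1 : (C t0).b x + (C t0).w x = 1)
    (hVIj : 2 + (C t0).w x + (C ρy).w uj ≤ p)
    (hVIjk : 2 + (C ρy).w uj + (C ρy).w uk ≤ p)
    (hf : IsChild 2 4 x0 x ∧ IsChild 2 4 x1 x ∧ IsChild 2 4 vk0 uk ∧ IsChild 2 4 vk1 uk ∧
        x0 ≠ x1 ∧ x0 ≠ vk0 ∧ x0 ≠ vk1 ∧ x1 ≠ vk0 ∧ x1 ≠ vk1 ∧ vk0 ≠ vk1 ∧
        x0 ≠ uj ∧ x0 ≠ uk ∧ x1 ≠ uj ∧ x1 ≠ uk ∧ uj ≠ uk ∧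
        vk0 ≠ uj ∧ vk0 ≠ x ∧ vk1 ≠ uj ∧ vk1 ≠ x ∧ uj ≠ x) : False := by
  obtain ⟨cx0, cx1, ck0, ck1, q1, q2, q3, q4, q5, q6, q7, q8, q9, q10,
    q11, q12, q13, q14, q15, q16⟩ := hf
  have hρkn : ρk ≤ n := by omega
  have hρxn : ρx ≤ n := by omega
  rcases lt_trichotomy ρx ρk with hA | hE | hB
  · -- Case A : x's black was completed before uk's black
    have f0 := critk vk0 ck0
    have f1 := critk vk1 ck1
    have hbj : (C ρy).b uj ≤ (C ρk).b uj + (C ρk).w uj :=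
      le_trans (alivej ρk (by omega) (by omega))
        (le_add_of_nonneg_right (hvalid ρk hρkn uj).2.1)
    have hbx : (C t0).b x ≤ (C ρk).b x + (C ρk).w x :=
      le_trans (alivex ρk (by omega) (by omega))
        (le_add_of_nonneg_right (hvalid ρk hρkn x).2.1)
    have hw := weight_ge4 (C ρk) (hvalid ρk hρkn) vk0 vk1 uj x
      q6 q12 q13 q14 q15 q16 f0.ge f1.ge hbj hbx
    have := hwt ρk hρkn
    linarith
  · -- ρx = ρk : four full nodes at once
    subst hE
    have f0 := critx x0 cx0
    have f1 := critx x1 cx1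
    have f2 := critk vk0 ck0
    have f3 := critk vk1 ck1
    have hw := weight_ge4 (C ρx) (hvalid ρx hρxn) x0 x1 vk0 vk1
      q1 q2 q3 q4 q5 q6 f0.ge f1.ge f2.ge f3.ge
    have := hwt ρx hρxn
    linarith
  · -- Case B : both level-2 blacks of y's children completed before x's black
    have f0 := critx x0 cx0
    have f1 := critx x1 cx1
    have hbj : (C ρy).b uj ≤ (C ρx).b uj + (C ρx).w uj :=
      le_trans (alivej ρx (by omega) (by omega))
        (le_add_of_nonneg_right (hvalid ρx hρxn uj).2.1)
    have hbk : (C ρy).b uk ≤ (C ρx).b uk + (C ρx).w uk :=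
      le_trans (alivek ρx (by omega) (by omega))
        (le_add_of_nonneg_right (hvalid ρx hρxn uk).2.1)
    have hw := weight_ge4 (C ρx) (hvalid ρx hρxn) x0 x1 uj uk
      q1 q7 q8 q9 q10 q11 f0.ge f1.ge hbj hbk
    have := hwt ρx hρxn
    linarith

theorem caseXY (hC0 : C 0 = FConfig.zero V4) (hCn : C n = FConfig.zero V4)
    (hvalid : ∀ t ≤ n, (C t).Valid)
    (hmove : ∀ t < n, FMove (IsChild 2 4) (C t) (C (t + 1)))
    (hwt : ∀ t ≤ n, (C t).weight ≤ p)
    (hp : p < 3)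
    (x y x0 x1 u0 u1 v00 v01 v10 v11 : V4) (t0 ρx ρy : ℕ)
    (ht0 : t0 ≤ n) (hρx : ρx < t0) (hρy : ρy < t0) (hxy : ρx < ρy)
    (critx : ∀ c, IsChild 2 4 c x → (C ρx).b c + (C ρx).w c = 1)
    (crity : ∀ c, IsChild 2 4 c y → (C ρy).b c + (C ρy).w c = 1)
    (alivex : ∀ s, ρx < s → s ≤ t0 → (C t0).b x ≤ (C s).b x)
    (alivey : ∀ s, ρy < s → s ≤ t0 → (C t0).b y ≤ (C s).b y)
    (hx1 : (C t0).b x + (C t0).w x = 1) (hy1 : (C t0).b y + (C t0).w y = 1)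
    (hI : 2 + (C t0).w x + (C t0).w y ≤ p)
    (hf : IsChild 2 4 x0 x ∧
        IsChild 2 4 x1 x ∧
        IsChild 2 4 u0 y ∧
        IsChild 2 4 u1 y ∧
        IsChild 2 4 v00 u0 ∧
        IsChild 2 4 v01 u0 ∧
        IsChild 2 4 v10 u1 ∧
        IsChild 2 4 v11 u1 ∧
        x ≠ y ∧
        x ≠ x0 ∧
        x ≠ x1 ∧
        x ≠ u0 ∧
        x ≠ u1 ∧
        x ≠ v00 ∧
        x ≠ v01 ∧
        x ≠ v10 ∧
        x ≠ v11 ∧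
        y ≠ x0 ∧
        y ≠ x1 ∧
        y ≠ u0 ∧
        y ≠ u1 ∧
        y ≠ v00 ∧
        y ≠ v01 ∧
        y ≠ v10 ∧
        y ≠ v11 ∧
        x0 ≠ x1 ∧
        x0 ≠ u0 ∧
        x0 ≠ u1 ∧
        x0 ≠ v00 ∧
        x0 ≠ v01 ∧
        x0 ≠ v10 ∧
        x0 ≠ v11 ∧
        x1 ≠ u0 ∧
        x1 ≠ u1 ∧
        x1 ≠ v00 ∧
        x1 ≠ v01 ∧
        x1 ≠ v10 ∧
        x1 ≠ v11 ∧
        u0 ≠ u1 ∧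
        u0 ≠ v00 ∧
        u0 ≠ v01 ∧
        u0 ≠ v10 ∧
        u0 ≠ v11 ∧
        u1 ≠ v00 ∧
        u1 ≠ v01 ∧
        u1 ≠ v10 ∧
        u1 ≠ v11 ∧
        v00 ≠ v01 ∧
        v00 ≠ v10 ∧
        v00 ≠ v11 ∧
        v01 ≠ v10 ∧
        v01 ≠ v11 ∧
        v10 ≠ v11) : False := by
  obtain ⟨cx0, cx1, cu0, cu1, cv00, cv01, cv10, cv11, d01, d02, d03, d04, d05, d06, d07, d08, d09, d12, d13, d14, d15, d16, d17, d18, d19, d23, d24, d25, d26, d27, d28, d29, d34, d35, d36, d37, d38, d39, d45, d46, d47, d48, d49, d56, d57, d58, d59, d67, d68, d69, d78, d79, d89⟩ := hf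
  have hvu0 : (C ρy).b u0 + (C ρy).w u0 = 1 := crity u0 cu0
  have hvu1 : (C ρy).b u1 + (C ρy).w u1 = 1 := crity u1 cu1
  -- whites sitting on y's children at time ρy survive until t0
  have hal : ∀ uj vj0 vj1 : V4, IsChild 2 4 vj0 uj → IsChild 2 4 vj1 uj →
      vj0 ≠ vj1 → vj0 ≠ u0 → vj0 ≠ u1 → vj1 ≠ u0 → vj1 ≠ u1 →
      vj0 ≠ x → vj0 ≠ y → vj1 ≠ x → vj1 ≠ y →
      (C ρy).w uj ≤ (C t0).w uj := by
    intro uj vj0 vj1 hcj0 hcj1 b1 b2 b3 b4 b5 b6 b7 b8 b9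
    rcases lt_or_ge 0 ((C ρy).w uj) with hpos | hnp
    · obtain ⟨σ, hσ1, hσ2, critσ, pers⟩ := exists_white_event (IsChild 2 4) hCn hmove uj n
        ρy (by omega) (by omega) hpos
      rcases lt_or_ge σ t0 with hlt | hge
      · exfalso
        rcases Nat.eq_or_lt_of_le hσ1 with he | hgt
        · have f0 := critσ vj0 hcj0
          have f1 := critσ vj1 hcj1
          rw [← he] at f0 f1
          have hw := weight_ge4 (C ρy) (hvalid ρy (by omega)) vj0 vj1 u0 u1
            b1 b2 b3 b4 b5 d45 f0.ge f1.ge hvu0.ge hvu1.ge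
          have := hwt ρy (by omega)
          linarith
        · have f0 := critσ vj0 hcj0
          have f1 := critσ vj1 hcj1
          have hbx : (C t0).b x ≤ (C σ).b x + (C σ).w x :=
            le_trans (alivex σ (by omega) (by omega))
              (le_add_of_nonneg_right (hvalid σ (by omega) x).2.1)
          have hby : (C t0).b y ≤ (C σ).b y + (C σ).w y :=
            le_trans (alivey σ (by omega) (by omega))
              (le_add_of_nonneg_right (hvalid σ (by omega) y).2.1)
          have hw := weight_ge4 (C σ) (hvalid σ (by omega)) vj0 vj1 x y
            b1 b6 b7 b8 b9 d01 f0.ge f1.ge hbx hby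
          have := hwt σ (by omega)
          linarith
      · exact pers t0 (by omega) hge
    · exact le_trans hnp (hvalid t0 ht0 uj).2.1
  have hw0 : (C ρy).w u0 ≤ (C t0).w u0 := hal u0 v00 v01 cv00 cv01 d67 d46.symm d56.symm d47.symm d57.symm d06.symm d16.symm d07.symm d17.symm
  have hw1 : (C ρy).w u1 ≤ (C t0).w u1 := hal u1 v10 v11 cv10 cv11 d89 d48.symm d58.symm d49.symm d59.symm d08.symm d18.symm d09.symm d19.symm
  have hVI0 : 2 + (C t0).w x + (C ρy).w u0 ≤ p :=
    whites2 hCn hvalid hmove hwt t0 ht0 x u0 x0 x1 v00 v01 x y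
      ⟨cx0, cx1, cv00, cv01, d23, d02.symm, d24, d03.symm, d34, d67, d06.symm, d46.symm, d07.symm, d47.symm, d04, d01⟩ hx1 hy1 _ _ (le_refl _) hw0
  have hVI1 : 2 + (C t0).w x + (C ρy).w u1 ≤ p :=
    whites2 hCn hvalid hmove hwt t0 ht0 x u1 x0 x1 v10 v11 x y
      ⟨cx0, cx1, cv10, cv11, d23, d02.symm, d25, d03.symm, d35, d89, d08.symm, d58.symm, d09.symm, d59.symm, d05, d01⟩ hx1 hy1 _ _ (le_refl _) hw1
  have hVI01 : 2 + (C ρy).w u0 + (C ρy).w u1 ≤ p :=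
    whites2 hCn hvalid hmove hwt t0 ht0 u0 u1 v00 v01 v10 v11 x y
      ⟨cv00, cv01, cv10, cv11, d67, d46.symm, d56.symm, d47.symm, d57.symm, d89, d48.symm, d58.symm, d49.symm, d59.symm, d45, d01⟩ hx1 hy1 _ _ hw0 hw1
  have hwxnn : 0 ≤ (C t0).w x := (hvalid t0 ht0 x).2.1
  have hb0pos : 0 < (C ρy).b u0 := by
    by_contra hcon
    push_neg at hcon
    linarith
  have hb1pos : 0 < (C ρy).b u1 := by
    by_contra hcon
    push_neg at hcon
    linarith
  obtain ⟨ρ0, hρ0, crit0, alive0⟩ :=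
    exists_black_event (IsChild 2 4) hC0 hmove u0 ρy (by omega) hb0pos
  obtain ⟨ρ1, hρ1, crit1, alive1⟩ :=
    exists_black_event (IsChild 2 4) hC0 hmove u1 ρy (by omega) hb1pos
  rcases lt_trichotomy ρ0 ρ1 with h01 | h01 | h01
  · exact caseJK hvalid hwt hp x u0 u1 x0 x1 v10 v11 t0 ρx ρy ρ0 ρ1
      hxy hρy ht0 h01 hρ1 critx crit1 alivex alive0 alive1 hvu0 hvu1 hx1 hVI0 hVI01
      ⟨cx0, cx1, cv10, cv11, d23, d28, d29, d38, d39, d89, d24, d25, d34, d35, d45, d48.symm, d08.symm, d49.symm, d09.symm, d04.symm⟩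
  · subst h01
    have f0 := crit0 v00 cv00
    have f1 := crit0 v01 cv01
    have f2 := crit1 v10 cv10
    have f3 := crit1 v11 cv11
    have hw := weight_ge4 (C ρ0) (hvalid ρ0 (by omega)) v00 v01 v10 v11
      d67 d68 d69 d78 d79 d89 f0.ge f1.ge f2.ge f3.ge
    have := hwt ρ0 (by omega)
    linarith
  · exact caseJK hvalid hwt hp x u1 u0 x0 x1 v00 v01 t0 ρx ρy ρ1 ρ0
      hxy hρy ht0 h01 hρ0 critx crit0 alivex alive1 alive0 hvu1 hvu0 hx1 hVI1
      (by linarith) ⟨cx0, cx1, cv00, cv01, d23, d26, d27, d36, d37, d67, d25, d24, d35, d34, d45.symm, d56.symm, d06.symm, d57.symm, d07.symm, d05.symm⟩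

theorem lower (p : ℝ) (h : FRPebbles 2 4 (by decide) p) : 3 ≤ p := by
  obtain ⟨n, C, hC0, hCn, hvalid, -, hmove, hgoal, hwt⟩ := h
  obtain ⟨T, hTn, hTroot⟩ := hgoal
  by_contra hcon
  push_neg at hcon
  have hroot : 0 < (C T).b R := by
    have h1 : (C T).b R = 1 := hTroot
    rw [h1]; norm_num
  obtain ⟨t0, ht0T, hcritR, -⟩ :=
    exists_black_event (IsChild 2 4) hC0 hmove R T hTn hroot
  have ht0n : t0 ≤ n := by omega
  have hvA0 : (C t0).b A0 + (C t0).w A0 = 1 := hcritR A0 (by decide)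
  have hvA1 : (C t0).b A1 + (C t0).w A1 = 1 := hcritR A1 (by decide)
  have hI : 2 + (C t0).w A0 + (C t0).w A1 ≤ p :=
    whites2 hCn hvalid hmove hwt t0 ht0n A0 A1 B0 B1 B2 B3 A0 A1
      (by decide) hvA0 hvA1 _ _ (le_refl _) (le_refl _)
  have hwA0nn : 0 ≤ (C t0).w A0 := (hvalid t0 ht0n A0).2.1
  have hwA1nn : 0 ≤ (C t0).w A1 := (hvalid t0 ht0n A1).2.1
  have hbA0 : 0 < (C t0).b A0 := by linarith
  have hbA1 : 0 < (C t0).b A1 := by linarith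
  obtain ⟨ρ0, hρ0, critA0, aliveA0⟩ :=
    exists_black_event (IsChild 2 4) hC0 hmove A0 t0 ht0n hbA0
  obtain ⟨ρ1, hρ1, critA1, aliveA1⟩ :=
    exists_black_event (IsChild 2 4) hC0 hmove A1 t0 ht0n hbA1
  rcases lt_trichotomy ρ0 ρ1 with h01 | h01 | h01
  · exact caseXY hC0 hCn hvalid hmove hwt hcon A0 A1 B0 B1 B2 B3 L4 L5 L6 L7
      t0 ρ0 ρ1 ht0n hρ0 hρ1 h01 critA0 critA1 aliveA0 aliveA1 hvA0 hvA1 hI (by (repeat' apply And.intro) <;> decide)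
  · subst h01
    have f0 := critA0 B0 (by decide)
    have f1 := critA0 B1 (by decide)
    have f2 := critA1 B2 (by decide)
    have f3 := critA1 B3 (by decide)
    have hw := weight_ge4 (C ρ0) (hvalid ρ0 (by omega)) B0 B1 B2 B3
      (by decide) (by decide) (by decide) (by decide) (by decide) (by decide)
      f0.ge f1.ge f2.ge f3.ge
    have := hwt ρ0 (by omega)
    linarith
  · exact caseXY hC0 hCn hvalid hmove hwt hcon A1 A0 B2 B3 B0 B1 L0 L1 L2 L3
      t0 ρ1 ρ0 ht0n hρ1 hρ0 h01 critA1 critA0 aliveA1 aliveA0 hvA1 hvA0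
      (by linarith) (by (repeat' apply And.intro) <;> decide)

end Lower

end PebAux

/-- The minimum cost of a fractional pebbling of the complete binary tree of height 4
is exactly 3. -/
theorem frPebbles_h4_eq :
    FRPebbles 2 4 (by omega) 3 ∧
    ∀ p : ℝ, FRPebbles 2 4 (by omega) p → (3 : ℝ) ≤ p := by
  exact ⟨PebAux.upper, fun p h => PebAux.lower p h⟩
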